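/- Let R = k[x_1,...,x_n] be a polynomial ring over a field of characteristic p > 0, m the homogeneous maximal ideal, I ⊆ R an ideal with m^d contained in the integral closure of I, and H a hyperplane through the origin cut out by a linear form ℓ. Then the F-pure thresholds satisfy c(I) - c(I|_H) ≥ 1/d, where I|_H is the image of I in R/ℓR. -/

import Mathlib

open MvPolynomial Filter

/-- The integral closure of an ideal `I`: elements `r` satisfying an equation
`r^n + a_1 r^{n-1} + ⋯ + a_n = 0` with `a_i ∈ I^i`. -/
def icl {R : Type*} [CommRing R] (I : Ideal R) : Set R :=
  {r | ∃ n : ℕ, 0 < n ∧ ∃ a : ℕ → R, (∀ i, a i ∈ I ^ i) ∧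
    r ^ n + ∑ i ∈ Finset.range n, a (i + 1) * r ^ (n - (i + 1)) = 0}

/-- `ν_I(q)` relative to a "Frobenius power" ideal `Fr`:
`max { t : I^t ⊄ Fr }`. -/
noncomputable def nuRel {R : Type*} [CommRing R] (I Fr : Ideal R) : ℕ :=
  sSup {t : ℕ | ¬ I ^ t ≤ Fr}

/-- The Frobenius power `(x_1^q,…,x_n^q)` of the homogeneous maximal ideal. -/
noncomputable def frobM (k : Type*) [Field k] (n q : ℕ) :
    Ideal (MvPolynomial (Fin n) k) :=
  Ideal.span (Set.range fun i : Fin n => (X i : MvPolynomial (Fin n) k) ^ q)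


section Aux

variable {k : Type*} [Field k] {p n : ℕ} [CharP k p]

/-- The ideal of polynomials all of whose monomials have degree at least `t`. -/
def degIdeal (n t : ℕ) (k : Type*) [Field k] : Ideal (MvPolynomial (Fin n) k) where
  carrier := {p | ∀ m ∈ p.support, t ≤ Finsupp.degree m}
  zero_mem' := by simp
  add_mem' := by
    intro a b ha hb m hm
    rcases Finset.mem_union.1 (MvPolynomial.support_add hm) with h | h
    · exact ha m h
    · exact hb m h
  smul_mem' := by
    intro c x hx m hm
    rcases Finset.mem_add.1 (MvPolynomial.support_mul c x hm) with ⟨a, ha, b, hb, rfl⟩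
    calc t ≤ Finsupp.degree b := hx b hb
    _ ≤ Finsupp.degree (a + b) := by
        rw [Finsupp.degree_eq_weight_one, map_add]; omega

lemma mul_degIdeal (s t : ℕ) :
    degIdeal n s k * degIdeal n t k ≤ degIdeal n (s + t) k := by
  rw [Ideal.mul_le]
  intro r hr p hp m hm
  rcases Finset.mem_add.1 (MvPolynomial.support_mul r p hm) with ⟨a, ha, b, hb, rfl⟩
  have h1 := hr a ha
  have h2 := hp b hb
  rw [Finsupp.degree_eq_weight_one] at *
  rw [map_add]; omega

lemma degIdeal_anti {s t : ℕ} (h : s ≤ t) : degIdeal n t k ≤ degIdeal n s k := by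
  intro x hx m hm
  exact le_trans h (hx m hm)

lemma span_X_le_degIdeal :
    Ideal.span (Set.range (X : Fin n → MvPolynomial (Fin n) k)) ≤ degIdeal n 1 k := by
  rw [Ideal.span_le]
  rintro _ ⟨i, rfl⟩ m hm
  rw [MvPolynomial.support_X] at hm
  simp only [Finset.mem_singleton] at hm
  subst hm
  simpa using Finsupp.le_degree i (Finsupp.single i 1)

lemma pow_span_X_le_degIdeal (t : ℕ) :
    Ideal.span (Set.range (X : Fin n → MvPolynomial (Fin n) k)) ^ t ≤ degIdeal n t k := by
  induction t with
  | zero => intro x _ m _; omega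
  | succ t ih =>
      calc Ideal.span (Set.range (X : Fin n → MvPolynomial (Fin n) k)) ^ (t+1)
          = Ideal.span (Set.range X) ^ t * Ideal.span (Set.range X) := by rw [pow_succ]
        _ ≤ degIdeal n t k * degIdeal n 1 k := Ideal.mul_mono ih span_X_le_degIdeal
        _ ≤ degIdeal n (t + 1) k := mul_degIdeal t 1

lemma one_not_mem_span_X :
    (1 : MvPolynomial (Fin n) k) ∉
      Ideal.span (Set.range (X : Fin n → MvPolynomial (Fin n) k)) := by
  intro h
  have h1 := span_X_le_degIdeal (n := n) (k := k) h (0 : Fin n →₀ ℕ) (by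
    rw [MvPolynomial.mem_support_iff]
    simp)
  simp [map_zero] at h1

lemma frobM_eq (k : Type*) [Field k] (n q : ℕ) :
    frobM k n q = Ideal.span ((fun s => monomial s (1 : k)) ''
      (Set.range fun i : Fin n => Finsupp.single i q)) := by
  unfold frobM
  congr 1
  rw [← Set.range_comp]
  apply congrArg
  funext i
  simp [Function.comp, X_pow_eq_monomial]

lemma mem_frobM_iff {q : ℕ} {x : MvPolynomial (Fin n) k} :
    x ∈ frobM k n q ↔ ∀ m ∈ x.support, ∃ i, q ≤ m i := by
  rw [frobM_eq, mem_ideal_span_monomial_image]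
  constructor
  · intro h m hm
    obtain ⟨s, ⟨i, rfl⟩, hle⟩ := h m hm
    exact ⟨i, by simpa using (Finsupp.single_le_iff).1 hle⟩
  · intro h m hm
    obtain ⟨i, hi⟩ := h m hm
    exact ⟨Finsupp.single i q, ⟨i, rfl⟩, Finsupp.single_le_iff.2 hi⟩

lemma degIdeal_le_frobM {q : ℕ} (hq : 1 ≤ q) :
    degIdeal n (n * (q - 1) + 1) k ≤ frobM k n q := by
  intro x hx
  rw [mem_frobM_iff]
  intro m hm
  by_contra hcon
  push_neg at hcon
  have hle : ∀ i : Fin n, m i ≤ q - 1 := fun i => by have := hcon i; omega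
  have hdeg : Finsupp.degree m ≤ n * (q - 1) := by
    calc Finsupp.degree m = ∑ i ∈ m.support, m i := rfl
      _ ≤ ∑ i : Fin n, m i := Finset.sum_le_sum_of_subset (Finset.subset_univ _)
      _ ≤ ∑ _i : Fin n, (q - 1) := Finset.sum_le_sum fun i _ => hle i
      _ = n * (q - 1) := by rw [Finset.sum_const, Finset.card_univ, Fintype.card_fin,
            smul_eq_mul]
  have := hx m hm
  omega

lemma frobM_le_span_X {q : ℕ} (hq : 1 ≤ q) :
    frobM k n q ≤ Ideal.span (Set.range (X : Fin n → MvPolynomial (Fin n) k)) := by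
  rw [frobM, Ideal.span_le]
  rintro _ ⟨i, rfl⟩
  obtain ⟨q', rfl⟩ : ∃ q', q = q' + 1 := ⟨q - 1, by omega⟩
  show (X i : MvPolynomial (Fin n) k) ^ (q' + 1) ∈ _
  rw [pow_succ]
  exact Ideal.mul_mem_left _ _ (Ideal.subset_span ⟨i, rfl⟩)

lemma colon_step {q : ℕ} (hq : 1 ≤ q) (j : Fin n)
    {g : MvPolynomial (Fin n) k} (h : g * X j ^ (q - 1) ∈ frobM k n q) :
    g ∈ frobM k n q ⊔ Ideal.span {(X j : MvPolynomial (Fin n) k)} := by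
  have key : ∀ m ∈ g.support, (∃ i, q ≤ m i) ∨ 1 ≤ m j := by
    intro m hm
    have hc : coeff (m + Finsupp.single j (q-1)) (g * X j ^ (q-1)) = coeff m g := by
      rw [X_pow_eq_monomial, coeff_mul_monomial, mul_one]
    have hmem : (m + Finsupp.single j (q-1)) ∈ (g * X j ^ (q-1)).support := by
      rw [mem_support_iff, hc]
      exact mem_support_iff.1 hm
    obtain ⟨i, hi⟩ := mem_frobM_iff.1 h _ hmem
    by_cases hij : i = j
    · subst hij
      rw [Finsupp.add_apply, Finsupp.single_eq_same] at hi
      omega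
    · left
      refine ⟨i, ?_⟩
      rwa [Finsupp.add_apply, Finsupp.single_eq_of_ne' (Ne.symm hij), add_zero] at hi
  have hmem2 : g ∈ Ideal.span ((fun s => monomial s (1 : k)) ''
      ((Set.range fun i : Fin n => Finsupp.single i q) ∪ {Finsupp.single j 1})) := by
    rw [mem_ideal_span_monomial_image]
    intro m hm
    rcases key m hm with ⟨i, hi⟩ | hj
    · exact ⟨Finsupp.single i q, Or.inl ⟨i, rfl⟩, Finsupp.single_le_iff.2 hi⟩
    · exact ⟨Finsupp.single j 1, Or.inr rfl, Finsupp.single_le_iff.2 hj⟩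
  rw [Set.image_union, Ideal.span_union, Set.image_singleton] at hmem2
  rw [frobM_eq]
  have hX : (X j : MvPolynomial (Fin n) k) = monomial (Finsupp.single j 1) 1 := by
    rw [← pow_one (X j), X_pow_eq_monomial]
  rw [hX]
  exact hmem2

lemma pow_mem_frobM (hp : p.Prime) {e : ℕ} {g : MvPolynomial (Fin n) k}
    (hg : g ∈ Ideal.span (Set.range (X : Fin n → MvPolynomial (Fin n) k))) :
    g ^ (p ^ e) ∈ frobM k n (p ^ e) := by
  haveI : Fact p.Prime := ⟨hp⟩
  haveI : CharP (MvPolynomial (Fin n) k) p := by infer_instance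
  induction hg using Submodule.span_induction with
  | mem x hx =>
      obtain ⟨i, rfl⟩ := hx
      exact Ideal.subset_span ⟨i, rfl⟩
  | zero =>
      rw [zero_pow (pow_ne_zero e hp.ne_zero)]
      exact Ideal.zero_mem (frobM k n (p ^ e))
  | add x y _ _ hx hy =>
      rw [add_pow_char_pow]
      exact Ideal.add_mem _ hx hy
  | smul r x _ hx =>
      rw [smul_eq_mul, mul_pow]
      exact Ideal.mul_mem_left _ _ hx

lemma algHom_frobM (hp : p.Prime) {e : ℕ} (φ : MvPolynomial (Fin n) k →ₐ[k] MvPolynomial (Fin n) k)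
    (hφ : ∀ i, φ (X i) ∈ Ideal.span (Set.range (X : Fin n → MvPolynomial (Fin n) k)))
    {x : MvPolynomial (Fin n) k} (hx : x ∈ frobM k n (p ^ e)) :
    φ x ∈ frobM k n (p ^ e) := by
  induction hx using Submodule.span_induction with
  | mem y hy =>
      obtain ⟨i, rfl⟩ := hy
      rw [map_pow]
      exact pow_mem_frobM hp (hφ i)
  | zero => rw [map_zero]; exact Ideal.zero_mem _
  | add a b _ _ ha hb => rw [map_add]; exact Ideal.add_mem _ ha hb
  | smul r a _ ha =>
      rw [smul_eq_mul, map_mul]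
      exact Ideal.mul_mem_left _ _ ha

lemma degree_one_single {m : Fin n →₀ ℕ} (h : Finsupp.degree m = 1) :
    ∃ i, m = Finsupp.single i 1 := by
  have hne : m.support.Nonempty := by
    rw [Finset.nonempty_iff_ne_empty]
    intro hc
    rw [show Finsupp.degree m = ∑ x ∈ m.support, m x from rfl, hc] at h
    simp at h
  obtain ⟨i, hi⟩ := hne
  have hsub : m.support = {i} := by
    apply Finset.eq_singleton_iff_unique_mem.2
    refine ⟨hi, fun j hj => ?_⟩
    by_contra hji
    have hss : ({j, i} : Finset (Fin n)) ⊆ m.support := by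
      intro x hx
      rcases Finset.mem_insert.1 hx with rfl | hx
      · exact hj
      · rwa [Finset.mem_singleton.1 hx]
    have hsum : ∑ x ∈ ({j, i} : Finset (Fin n)), m x ≤ Finsupp.degree m :=
      Finset.sum_le_sum_of_subset hss
    rw [Finset.sum_insert (by simpa using hji), Finset.sum_singleton, h] at hsum
    have h1 := Finsupp.mem_support_iff.1 hi
    have h2 := Finsupp.mem_support_iff.1 hj
    omega
  obtain ⟨hne0, heq⟩ := Finsupp.support_eq_singleton.1 hsub
  have hmi : m i = 1 := by
    have h' := h
    rw [show Finsupp.degree m = ∑ x ∈ m.support, m x from rfl, hsub, Finset.sum_singleton] at h'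
    exact h'
  exact ⟨i, by rw [heq, hmi]⟩

lemma linear_decomp (ℓ : MvPolynomial (Fin n) k) (hl : ℓ.IsHomogeneous 1) :
    ℓ = ∑ i : Fin n, C (coeff (Finsupp.single i 1) ℓ) * X i := by
  apply MvPolynomial.ext
  intro m
  rw [coeff_sum]
  simp_rw [coeff_C_mul, coeff_X']
  by_cases hm : ∃ i, m = Finsupp.single i 1
  · obtain ⟨i₀, rfl⟩ := hm
    rw [Finset.sum_eq_single i₀]
    · simp
    · intro b _ hb
      rw [if_neg, mul_zero]
      intro hcon
      exact hb (Finsupp.single_left_injective one_ne_zero hcon.symm).symm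
    · simp
  · have h0 : coeff m ℓ = 0 := by
      by_contra hc
      have h1 := hl hc
      have hdeg : Finsupp.degree m = 1 := by
        rw [Finsupp.degree_eq_weight_one]; exact h1
      obtain ⟨i, hi⟩ := degree_one_single hdeg
      exact hm ⟨i, hi⟩
    rw [h0]
    symm
    apply Finset.sum_eq_zero
    intro i _
    rw [if_neg, mul_zero]
    exact fun hcon => hm ⟨i, hcon.symm⟩

lemma homog_mem_span_X {ℓ : MvPolynomial (Fin n) k} (hl : ℓ.IsHomogeneous 1) :
    ℓ ∈ Ideal.span (Set.range (X : Fin n → MvPolynomial (Fin n) k)) := by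
  rw [linear_decomp ℓ hl]
  exact Ideal.sum_mem _ fun i _ => Ideal.mul_mem_left _ _ (Ideal.subset_span ⟨i, rfl⟩)

lemma icl_pow {R : Type*} [CommRing R] {I : Ideal R} {r : R} (hr : r ∈ icl I) :
    ∃ n₀ : ℕ, 0 < n₀ ∧ ∀ m : ℕ, r ^ m ∈ I ^ (m + 1 - n₀) := by
  obtain ⟨n₀, hn₀, a, ha, heq⟩ := hr
  refine ⟨n₀, hn₀, fun m => ?_⟩
  induction m using Nat.strong_induction_on with
  | _ m ih =>
    by_cases hm : m + 1 ≤ n₀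
    · have h0 : m + 1 - n₀ = 0 := by omega
      rw [h0, pow_zero, Ideal.one_eq_top]
      exact Submodule.mem_top
    · push_neg at hm
      have hkey : r ^ m = -∑ i ∈ Finset.range n₀, a (i + 1) * r ^ (m - (i + 1)) := by
        have h1 : r ^ m = r ^ n₀ * r ^ (m - n₀) := by
          rw [← pow_add]; congr 1; omega
        have h2 : r ^ n₀ = -∑ i ∈ Finset.range n₀, a (i + 1) * r ^ (n₀ - (i + 1)) := by
          linear_combination heq
        rw [h1, h2, neg_mul, Finset.sum_mul]
        congr 1
        apply Finset.sum_congr rfl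
        intro i hi
        have hi' : i + 1 ≤ n₀ := Finset.mem_range.1 hi
        rw [mul_assoc, ← pow_add]
        congr 2
        omega
      rw [hkey]
      apply neg_mem
      apply Ideal.sum_mem
      intro i hi
      have hi' : i + 1 ≤ n₀ := Finset.mem_range.1 hi
      have hmem := ih (m - (i + 1)) (by omega)
      have hprod : a (i + 1) * r ^ (m - (i + 1)) ∈ I ^ ((i + 1) + (m - (i + 1) + 1 - n₀)) := by
        rw [pow_add]
        exact Ideal.mul_mem_mul (ha (i + 1)) hmem
      refine Set.mem_of_mem_of_subset hprod (Ideal.pow_le_pow_right ?_)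
      omega

end Aux

section Aux2
variable {k : Type*} [Field k] {p n : ℕ} [CharP k p]

lemma colon_main (hp : p.Prime) (e : ℕ) {ℓ : MvPolynomial (Fin n) k}
    (hl : ℓ.IsHomogeneous 1) (hl0 : ℓ ≠ 0) {f : MvPolynomial (Fin n) k}
    (hf : f ∉ frobM k n (p ^ e) ⊔ Ideal.span {ℓ})
    (hmul : f * ℓ ^ (p ^ e - 1) ∈ frobM k n (p ^ e)) : False := by
  set c : Fin n → k := fun i => coeff (Finsupp.single i 1) ℓ with hc
  have hdec : ℓ = ∑ i : Fin n, C (c i) * X i := linear_decomp ℓ hl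
  obtain ⟨j, hj⟩ : ∃ j, c j ≠ 0 := by
    by_contra hcon
    push_neg at hcon
    apply hl0
    rw [hdec]
    apply Finset.sum_eq_zero
    intro i _
    rw [hcon i, map_zero, zero_mul]
  set u : MvPolynomial (Fin n) k := ∑ i ∈ Finset.univ.erase j, C (c i) * X i with hu
  have hℓu : ℓ = C (c j) * X j + u := by
    rw [hdec, ← Finset.add_sum_erase _ _ (Finset.mem_univ j)]
  have humem : u ∈ Ideal.span (Set.range (X : Fin n → MvPolynomial (Fin n) k)) :=
    Ideal.sum_mem _ fun i _ => Ideal.mul_mem_left _ _ (Ideal.subset_span ⟨i, rfl⟩)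
  have hXmem : ∀ i : Fin n, (X i : MvPolynomial (Fin n) k) ∈
      Ideal.span (Set.range (X : Fin n → MvPolynomial (Fin n) k)) :=
    fun i => Ideal.subset_span ⟨i, rfl⟩
  have hℓmem : ℓ ∈ Ideal.span (Set.range (X : Fin n → MvPolynomial (Fin n) k)) := by
    rw [hℓu]; exact Ideal.add_mem _ (Ideal.mul_mem_left _ _ (hXmem j)) humem
  set v : Fin n → MvPolynomial (Fin n) k :=
    fun i => if i = j then C (c j)⁻¹ * (X j - u) else X i with hv
  set w : Fin n → MvPolynomial (Fin n) k := fun i => if i = j then ℓ else X i with hw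
  set σ := aeval (R := k) v with hσ
  set τ := aeval (R := k) w with hτdef
  have hvmem : ∀ i, v i ∈ Ideal.span (Set.range (X : Fin n → MvPolynomial (Fin n) k)) := by
    intro i
    by_cases hij : i = j
    · simp only [hv, if_pos hij]
      exact Ideal.mul_mem_left _ _ (Ideal.sub_mem _ (hXmem j) humem)
    · simp only [hv, if_neg hij]; exact hXmem i
  have hwmem : ∀ i, w i ∈ Ideal.span (Set.range (X : Fin n → MvPolynomial (Fin n) k)) := by
    intro i
    by_cases hij : i = j
    · simp only [hw, if_pos hij]; exact hℓmem
    · simp only [hw, if_neg hij]; exact hXmem i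
  have hτu : τ u = u := by
    rw [hu, map_sum]
    apply Finset.sum_congr rfl
    intro i hi
    have hij : i ≠ j := (Finset.mem_erase.1 hi).1
    rw [map_mul, hτdef, aeval_C, aeval_X]
    simp only [hw, if_neg hij]
    rw [algebraMap_eq]
  have hτσ : ∀ g : MvPolynomial (Fin n) k, τ (σ g) = g := by
    intro g
    have hcomp : τ.comp σ = AlgHom.id k (MvPolynomial (Fin n) k) := by
      apply MvPolynomial.algHom_ext
      intro i
      simp only [AlgHom.comp_apply, AlgHom.id_apply]
      rw [hσ, aeval_X]
      by_cases hij : i = j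
      · subst hij
        simp only [hv, if_pos rfl]
        rw [map_mul, map_sub, hτdef, aeval_C, aeval_X, ← hτdef, hτu]
        simp only [hw, if_pos rfl]
        rw [hℓu, algebraMap_eq, add_sub_cancel_right, ← mul_assoc, ← C_mul,
          inv_mul_cancel₀ hj, C_1, one_mul]
      · simp only [hv, if_neg hij]
        rw [hτdef, aeval_X]
        simp only [hw, if_neg hij]
    calc τ (σ g) = (τ.comp σ) g := rfl
    _ = g := by rw [hcomp]; rfl
  have hσu : σ u = u := by
    rw [hu, map_sum]
    apply Finset.sum_congr rfl
    intro i hi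
    have hij : i ≠ j := (Finset.mem_erase.1 hi).1
    rw [map_mul, hσ, aeval_C, aeval_X]
    simp only [hv, if_neg hij]
    rw [algebraMap_eq]
  have hσℓ : σ ℓ = X j := by
    rw [hℓu, map_add, map_mul, hσ, aeval_C, aeval_X, ← hσ, hσu]
    simp only [hv, if_pos rfl]
    rw [algebraMap_eq, ← mul_assoc, ← C_mul, mul_inv_cancel₀ hj, C_1, one_mul,
      sub_add_cancel]
  have hq1 : 1 ≤ p ^ e := Nat.one_le_pow _ _ hp.pos
  have h1 : σ f * X j ^ (p ^ e - 1) ∈ frobM k n (p ^ e) := by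
    have h0 := algHom_frobM hp σ (fun i => by rw [hσ, aeval_X]; exact hvmem i) hmul
    rwa [map_mul, map_pow, hσℓ] at h0
  have h2 : σ f ∈ frobM k n (p ^ e) ⊔ Ideal.span {(X j : MvPolynomial (Fin n) k)} :=
    colon_step hq1 j h1
  obtain ⟨a, ha, b, hb, hab⟩ := Submodule.mem_sup.1 h2
  obtain ⟨r, hr⟩ := Ideal.mem_span_singleton.1 hb
  apply hf
  have hfeq : f = τ a + ℓ * τ r := by
    have h3 := congrArg τ hab
    rw [hτσ f] at h3
    rw [← h3, map_add, hr, map_mul, hτdef, aeval_X, ← hτdef]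
    simp only [hw, if_pos rfl]
  rw [hfeq]
  apply Submodule.add_mem_sup
  · exact algHom_frobM hp τ (fun i => by rw [hτdef, aeval_X]; exact hwmem i) ha
  · exact Ideal.mem_span_singleton.2 (Dvd.intro _ rfl)

end Aux2

/-- in char `p > 0`, if `m^d` is contained in the integral closure
of `I` and `H = V(ℓ)` is a hyperplane through the origin, then the F-pure
thresholds satisfy `c(I) - c(I|_H) ≥ 1/d`. -/
theorem stmt19 (k : Type*) [Field k] (p : ℕ) (hp : p.Prime) [CharP k p]
    (n d : ℕ) (hd : 0 < d)
    (I : Ideal (MvPolynomial (Fin n) k))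
    (hIm : I ≤ Ideal.span (Set.range (X : Fin n → MvPolynomial (Fin n) k)))
    (hic : ((Ideal.span (Set.range (X : Fin n → MvPolynomial (Fin n) k)) ^ d :
        Ideal (MvPolynomial (Fin n) k)) : Set _) ⊆ icl I)
    (ℓ : MvPolynomial (Fin n) k) (hl : ℓ.IsHomogeneous 1) (hl0 : ℓ ≠ 0)
    (cI cH : ℝ)
    (hcI : Tendsto (fun e : ℕ => (nuRel I (frobM k n (p ^ e)) : ℝ) / ((p : ℝ) ^ e))
      atTop (nhds cI))
    (hcH : Tendsto (fun e : ℕ =>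
        (nuRel (I.map (Ideal.Quotient.mk (Ideal.span {ℓ})))
          ((frobM k n (p ^ e)).map (Ideal.Quotient.mk (Ideal.span {ℓ}))) : ℝ) / ((p : ℝ) ^ e))
      atTop (nhds cH)) :
    1 / (d : ℝ) ≤ cI - cH := by
  classical
  have hℓm : ℓ ∈ Ideal.span (Set.range (X : Fin n → MvPolynomial (Fin n) k)) :=
    homog_mem_span_X hl
  have hld : ℓ ^ d ∈ icl I := hic (Ideal.pow_mem_pow hℓm d)
  obtain ⟨n₀, hn₀, hpow⟩ := icl_pow hld
  have hp1 : (1:ℝ) < p := by exact_mod_cast hp.one_lt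
  -- the key per-exponent inequality
  have key : ∀ e : ℕ,
      nuRel (I.map (Ideal.Quotient.mk (Ideal.span {ℓ})))
          ((frobM k n (p ^ e)).map (Ideal.Quotient.mk (Ideal.span {ℓ}))) +
        ((p ^ e - 1) / d + 1) ≤ nuRel I (frobM k n (p ^ e)) + n₀ := by
    intro e
    have hq1 : 1 ≤ p ^ e := Nat.one_le_pow _ _ hp.pos
    set q := p ^ e with hq
    set Fr := frobM k n q with hFr
    set π := Ideal.Quotient.mk (Ideal.span {ℓ}) with hπ
    set B := n * (q - 1) + 1 with hB
    have hIpow : ∀ t, B ≤ t → I ^ t ≤ Fr := by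
      intro t ht
      calc I ^ t ≤ Ideal.span (Set.range (X : Fin n → MvPolynomial (Fin n) k)) ^ t :=
            Ideal.pow_right_mono hIm t
        _ ≤ degIdeal n t k := pow_span_X_le_degIdeal t
        _ ≤ degIdeal n B k := degIdeal_anti ht
        _ ≤ Fr := degIdeal_le_frobM hq1
    have hbddI : BddAbove {t : ℕ | ¬ I ^ t ≤ Fr} := by
      refine ⟨B, fun t ht => ?_⟩
      by_contra hc
      push_neg at hc
      exact ht (hIpow t (le_of_lt hc))
    have hbddH : BddAbove {t : ℕ | ¬ (I.map π) ^ t ≤ Fr.map π} := by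
      refine ⟨B, fun t ht => ?_⟩
      by_contra hc
      push_neg at hc
      apply ht
      rw [← Ideal.map_pow]
      exact Ideal.map_mono (hIpow t (le_of_lt hc))
    have h1notm : (1 : MvPolynomial (Fin n) k) ∉
        Fr ⊔ Ideal.span {ℓ} := by
      intro hc
      apply one_not_mem_span_X (n := n) (k := k)
      refine (sup_le (frobM_le_span_X hq1) ?_) hc
      rw [Ideal.span_le, Set.singleton_subset_iff]
      exact hℓm
    have h0H : 0 ∈ {t : ℕ | ¬ (I.map π) ^ t ≤ Fr.map π} := by
      intro hc
      change (I.map π) ^ 0 ≤ Fr.map π at hc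
      rw [Submodule.pow_zero, Ideal.one_eq_top, top_le_iff] at hc
      have h1 : (1 : MvPolynomial (Fin n) k ⧸ Ideal.span {ℓ}) ∈ Fr.map π := by
        rw [hc]; exact Submodule.mem_top
      obtain ⟨x, hx, hx1⟩ := Ideal.mem_map_iff_of_surjective π
        Ideal.Quotient.mk_surjective |>.1 h1
      have hker : x - 1 ∈ Ideal.span {ℓ} := by
        rw [← Ideal.Quotient.eq_zero_iff_mem, map_sub, hx1, map_one, sub_self]
      apply h1notm
      have : (1 : MvPolynomial (Fin n) k) = x - (x - 1) := by ring
      rw [this]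
      exact Submodule.sub_mem _ (Ideal.mem_sup_left hx) (Ideal.mem_sup_right hker)
    set N := nuRel (I.map π) (Fr.map π) with hN
    have hNmem : N ∈ {t : ℕ | ¬ (I.map π) ^ t ≤ Fr.map π} :=
      Nat.sSup_mem ⟨0, h0H⟩ hbddH
    have hInotle : ¬ I ^ N ≤ Fr ⊔ Ideal.span {ℓ} := by
      intro hle
      apply hNmem
      rw [← Ideal.map_pow]
      calc (I ^ N).map π ≤ (Fr ⊔ Ideal.span {ℓ}).map π := Ideal.map_mono hle
        _ = Fr.map π ⊔ (Ideal.span {ℓ}).map π := Ideal.map_sup _ _ _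
        _ = Fr.map π ⊔ Ideal.span {π ℓ} := by rw [Ideal.map_span, Set.image_singleton]
        _ = Fr.map π := by
            rw [show π ℓ = 0 from Ideal.Quotient.eq_zero_iff_mem.2
              (Ideal.mem_span_singleton_self ℓ), Ideal.span_singleton_eq_bot.2 rfl,
              sup_bot_eq]
    obtain ⟨f, hfI, hfnot⟩ := SetLike.not_le_iff_exists.1 hInotle
    set s := (q - 1) / d with hs
    have hlq : ℓ ^ (q - 1) ∈ I ^ (s + 1 - n₀) := by
      have hdec : ℓ ^ (q - 1) = (ℓ ^ d) ^ s * ℓ ^ ((q - 1) % d) := by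
        rw [← pow_mul, ← pow_add]
        congr 1
        rw [hs]
        exact (Nat.div_add_mod (q - 1) d).symm
      rw [hdec]
      exact Ideal.mul_mem_right _ _ (hpow s)
    have hfl : f * ℓ ^ (q - 1) ∈ I ^ (N + (s + 1 - n₀)) := by
      rw [pow_add]
      exact Ideal.mul_mem_mul hfI hlq
    have hnotin : f * ℓ ^ (q - 1) ∉ Fr := by
      intro hc
      exact colon_main hp e hl hl0 hfnot hc
    have hmemS : N + (s + 1 - n₀) ∈ {t : ℕ | ¬ I ^ t ≤ Fr} :=
      fun hle => hnotin (hle hfl)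
    have hle : N + (s + 1 - n₀) ≤ nuRel I Fr := le_csSup hbddI hmemS
    rw [nuRel] at hle ⊢
    omega
  -- pass to the limit
  have hbound : ∀ e : ℕ,
      1 / (d : ℝ) - (n₀ : ℝ) * ((p : ℝ)⁻¹) ^ e ≤
        (nuRel I (frobM k n (p ^ e)) : ℝ) / (p : ℝ) ^ e -
          (nuRel (I.map (Ideal.Quotient.mk (Ideal.span {ℓ})))
            ((frobM k n (p ^ e)).map (Ideal.Quotient.mk (Ideal.span {ℓ}))) : ℝ) / (p : ℝ) ^ e := by
    intro e
    have hq0 : (0 : ℝ) < (p : ℝ) ^ e := by positivity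
    have hd0 : (0 : ℝ) < (d : ℝ) := by exact_mod_cast hd
    set νI := nuRel I (frobM k n (p ^ e)) with hνI
    set νH := nuRel (I.map (Ideal.Quotient.mk (Ideal.span {ℓ})))
      ((frobM k n (p ^ e)).map (Ideal.Quotient.mk (Ideal.span {ℓ}))) with hνH
    set s := (p ^ e - 1) / d with hs
    have hq1 : 1 ≤ p ^ e := Nat.one_le_pow _ _ hp.pos
    have hA : (νH : ℝ) + ((s : ℝ) + 1) ≤ (νI : ℝ) + n₀ := by
      have := key e
      push_cast
      exact_mod_cast (by exact_mod_cast this : ((νH + (s + 1) : ℕ) : ℝ) ≤ ((νI + n₀ : ℕ) : ℝ))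
    have hBn : p ^ e ≤ d * (s + 1) := by
      have h1 := Nat.div_add_mod (p ^ e - 1) d
      have h2 : (p ^ e - 1) % d < d := Nat.mod_lt _ hd
      have h3 : d * (s + 1) = d * ((p ^ e - 1) / d) + d := by rw [hs]; ring
      have h4 : p ^ e - 1 + 1 = p ^ e := Nat.succ_pred_eq_of_pos hq1
      rw [h3]
      linarith
    have hB : ((p : ℝ) ^ e) ≤ (d : ℝ) * ((s : ℝ) + 1) := by exact_mod_cast hBn
    have h1 : (1 : ℝ) / d ≤ ((s : ℝ) + 1) / (p : ℝ) ^ e := by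
      rw [div_le_div_iff₀ hd0 hq0]
      linarith
    have h2 : ((s : ℝ) + 1) - (n₀ : ℝ) ≤ (νI : ℝ) - (νH : ℝ) := by linarith
    have h3 : (((s : ℝ) + 1) - (n₀ : ℝ)) / (p : ℝ) ^ e ≤ ((νI : ℝ) - (νH : ℝ)) / (p : ℝ) ^ e := by
      gcongr
    rw [sub_div, sub_div] at h3
    have hinv : (n₀ : ℝ) * ((p : ℝ)⁻¹) ^ e = (n₀ : ℝ) / (p : ℝ) ^ e := by
      rw [inv_pow, div_eq_mul_inv]
    rw [hinv]
    linarith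
  have htendB : Tendsto (fun e : ℕ => 1 / (d : ℝ) - (n₀ : ℝ) * ((p : ℝ)⁻¹) ^ e)
      atTop (nhds (1 / (d : ℝ))) := by
    have h0 : Tendsto (fun e : ℕ => ((p : ℝ)⁻¹) ^ e) atTop (nhds 0) := by
      apply tendsto_pow_atTop_nhds_zero_of_lt_one
      · positivity
      · rw [inv_lt_one_iff₀]
        right
        exact hp1
    have := (h0.const_mul (n₀ : ℝ)).const_sub (1 / (d : ℝ))
    simpa using this
  exact le_of_tendsto_of_tendsto' htendB (hcI.sub hcH) hbound
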